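/- For a prime p ≡ 5 (mod 8), set B(p) = (2/5)·∑_{s ∈ ℤ, s² < p, 4 ∣ (p−s²)} σ((p−s²)/4), where σ denotes the sum-of-divisors function and the sum runs over all integers s (positive, negative, and zero) with s² < p and p − s² divisible by 4. Then B(5) = 4/5, B(13) = 4, and B(p) > 4 for every prime p ≡ 5 (mod 8) with p > 13. (By a theorem of Cohen, B(p) equals the generalized Bernoulli number B_{2,ψ} attached to the quadratic character ψ modulo p.) -/

import Mathlib

open Finset

/-- the sum-of-divisors function, as a rational number. -/
def sigmaNat (m : ℕ) : ℚ := ∑ d ∈ m.divisors, (d : ℚ)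

lemma sigmaNat_nonneg (m : ℕ) : 0 ≤ sigmaNat m :=
  Finset.sum_nonneg fun d _ => by positivity

lemma sigmaNat_ge (m : ℕ) (hm : 2 ≤ m) : (m : ℚ) + 1 ≤ sigmaNat m := by
  have h : ({1, m} : Finset ℕ) ⊆ m.divisors := by
    intro d hd
    simp only [Finset.mem_insert, Finset.mem_singleton] at hd
    rw [Nat.mem_divisors]
    refine ⟨?_, by omega⟩
    rcases hd with rfl | rfl
    · exact one_dvd m
    · exact dvd_rfl
  calc (m:ℚ) + 1 = ∑ d ∈ ({1, m} : Finset ℕ), (d:ℚ) := by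
        rw [Finset.sum_pair (by omega : 1 ≠ m)]; push_cast; ring
    _ ≤ sigmaNat m := Finset.sum_le_sum_of_subset_of_nonneg h (fun d _ _ => by positivity)

/-- `B(p) = (2/5)·∑_{s ∈ ℤ, s² < p, 4 ∣ (p−s²)} σ((p−s²)/4)`, the sum running over
all integers `s` with `s² < p` and `4 ∣ p − s²`. -/
noncomputable def Bp (p : ℕ) : ℚ :=
  (2 / 5) * ∑ s ∈ (Finset.Icc (-(p : ℤ)) (p : ℤ)).filter
      (fun s => s ^ 2 < (p : ℤ) ∧ (4 : ℤ) ∣ ((p : ℤ) - s ^ 2)),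
    sigmaNat ((((p : ℤ) - s ^ 2) / 4).toNat)

theorem bernoulli_B2psi_values :
    Bp 5 = 4 / 5 ∧ Bp 13 = 4 ∧
      ∀ p : ℕ, p.Prime → p % 8 = 5 → p > 13 → Bp p > 4 := by
  refine ⟨?_, ?_, ?_⟩
  · rw [Bp]
    norm_num
    rw [show (Finset.Icc (-(5:ℤ)) 5).filter (fun s => s^2 < 5 ∧ (4:ℤ) ∣ (5 - s^2))
        = ({-1,1} : Finset ℤ) from by decide]
    rw [Finset.sum_pair (by norm_num : (-1:ℤ) ≠ 1)]
    norm_num [sigmaNat]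
  · rw [Bp]
    norm_num
    rw [show (Finset.Icc (-(13:ℤ)) 13).filter (fun s => s^2 < 13 ∧ (4:ℤ) ∣ (13 - s^2))
        = ({-3,-1,1,3} : Finset ℤ) from by decide]
    norm_num [Finset.sum_insert, Finset.mem_insert, Finset.mem_singleton, sigmaNat,
      Int.toNat_natCast, show ((3:ℤ).toNat).divisors = {1,3} from by decide]
  · intro p hp h8 h13
    have hp21 : 21 ≤ p := by omega
    have hpz : (21 : ℤ) ≤ (p : ℤ) := by exact_mod_cast hp21
    have h8z : (p : ℤ) % 8 = 5 := by omega
    set S := (Finset.Icc (-(p : ℤ)) (p : ℤ)).filter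
        (fun s => s ^ 2 < (p : ℤ) ∧ (4 : ℤ) ∣ ((p : ℤ) - s ^ 2)) with hS
    have hmem : ∀ s : ℤ, s = 1 ∨ s = -1 → s ∈ S := by
      intro s hs
      rcases hs with rfl | rfl <;>
        · simp only [hS, Finset.mem_filter, Finset.mem_Icc]
          norm_num
          omega
    have hsub : ({-1, 1} : Finset ℤ) ⊆ S := by
      intro s hs
      simp only [Finset.mem_insert, Finset.mem_singleton] at hs
      rcases hs with rfl | rfl
      · exact hmem _ (Or.inr rfl)
      · exact hmem _ (Or.inl rfl)
    have hsum : ∑ s ∈ ({-1, 1} : Finset ℤ), sigmaNat ((((p : ℤ) - s ^ 2) / 4).toNat)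
        ≤ ∑ s ∈ S, sigmaNat ((((p : ℤ) - s ^ 2) / 4).toNat) :=
      Finset.sum_le_sum_of_subset_of_nonneg hsub (fun _ _ _ => sigmaNat_nonneg _)
    set m := (((p : ℤ) - 1) / 4).toNat with hm
    have hm5 : 5 ≤ m := by omega
    have hpair : ∑ s ∈ ({-1, 1} : Finset ℤ), sigmaNat ((((p : ℤ) - s ^ 2) / 4).toNat)
        = 2 * sigmaNat m := by
      rw [Finset.sum_pair (by norm_num : (-1:ℤ) ≠ 1)]
      norm_num [hm]
      ring
    have h6 : (6 : ℚ) ≤ sigmaNat m := by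
      have h1 := sigmaNat_ge m (by omega)
      have h2 : (5 : ℚ) ≤ (m : ℚ) := by exact_mod_cast hm5
      linarith
    have hfin : (12 : ℚ) ≤ ∑ s ∈ S, sigmaNat ((((p : ℤ) - s ^ 2) / 4).toNat) := by
      rw [hpair] at hsum; linarith
    have hBp : Bp p = (2 / 5 : ℚ) * ∑ s ∈ S, sigmaNat ((((p : ℤ) - s ^ 2) / 4).toNat) := by
      rw [Bp, hS]
    rw [hBp]
    linarith
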